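/- arXiv:0712.0231 — 3 statements merged into one kernel-verified Lean document; each statement's English description precedes it below -/
import Mathlib

section
/- Fix positive integers n, l and an integer s. For a strictly decreasing sequence k = (k_1 > k_2 > …) of integers with k_i = s − i + 1 for all sufficiently large i, write each k_i uniquely as k_i = a_i + n(b_i − 1) − n·l·m_i with a_i ∈ {1, …, n}, b_i ∈ {1, …, l}, m_i ∈ ℤ. For each b ∈ {1, …, l}, extract the subsequence of values a_i − n·m_i over indices i with b_i = b, in order. Then this subsequence k^{(b)} = (k^{(b)}_1, k^{(b)}_2, …) is strictly decreasing, and there exists a unique integer s_b such that k^{(b)}_i = s_b − i + 1 for all sufficiently large i; moreover s_1 + s_2 + ⋯ + s_l = s. -/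
/-! Auxiliary development for Uglov's decomposition. -/

def uA (n x : ℤ) : ℤ := (x - 1) % n + 1
def uB (n l x : ℤ) : ℤ := (x - 1) % (n * l) / n + 1
def uM (n l x : ℤ) : ℤ := -((x - 1) / (n * l))
def uC (n l x : ℤ) : ℤ := uA n x - n * uM n l x
def uPsi (n l b0 c : ℤ) : ℤ := (c - 1) % n + 1 + n * (b0 - 1) + n * l * ((c - 1) / n)

section Aux
variable {n l : ℤ}

lemma uA_bounds (hn : 0 < n) (x : ℤ) : 1 ≤ uA n x ∧ uA n x ≤ n := by
  have h1 := Int.emod_nonneg (x - 1) hn.ne'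
  have h2 := Int.emod_lt_of_pos (x - 1) hn
  unfold uA; omega

lemma uB_bounds (hn : 0 < n) (hl : 0 < l) (x : ℤ) : 1 ≤ uB n l x ∧ uB n l x ≤ l := by
  have hnl : 0 < n * l := mul_pos hn hl
  have h1 := Int.emod_nonneg (x - 1) hnl.ne'
  have h2 : (x - 1) % (n * l) < l * n := by
    have := Int.emod_lt_of_pos (x - 1) hnl; linarith [mul_comm n l]
  have h3 : 0 ≤ (x - 1) % (n * l) / n := Int.ediv_nonneg h1 hn.le
  have h4 : (x - 1) % (n * l) / n < l := (Int.ediv_lt_iff_lt_mul hn).2 h2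
  unfold uB; omega

lemma u_decomp (x : ℤ) (hn : 0 < n) (hl : 0 < l) :
    x = uA n x + n * (uB n l x - 1) - n * l * uM n l x := by
  have hdvd : n ∣ n * l := ⟨l, rfl⟩
  have e1 : (x - 1) % (n * l) % n = (x - 1) % n := Int.emod_emod_of_dvd _ hdvd
  have e2 : (x - 1) % (n * l) % n + n * ((x - 1) % (n * l) / n) = (x - 1) % (n * l) :=
    Int.emod_add_mul_ediv _ _
  have e3 : (x - 1) % (n * l) + (n * l) * ((x - 1) / (n * l)) = x - 1 := Int.emod_add_mul_ediv _ _
  unfold uA uB uM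
  linarith [e1, e2, e3]

lemma u_uniq (hn : 0 < n) (hl : 0 < l) {a b m x : ℤ} (ha1 : 1 ≤ a) (ha2 : a ≤ n)
    (hb1 : 1 ≤ b) (hb2 : b ≤ l) (hx : x = a + n * (b - 1) - n * l * m) :
    a = uA n x ∧ b = uB n l x ∧ m = uM n l x := by
  have hnl : 0 < n * l := mul_pos hn hl
  have hr1 : 0 ≤ (a - 1) + n * (b - 1) := by nlinarith
  have hr2 : (a - 1) + n * (b - 1) < n * l := by nlinarith
  have h0 : (x - 1) / (n * l) = -m ∧ (x - 1) % (n * l) = (a - 1) + n * (b - 1) :=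
    (Int.ediv_emod_unique hnl).2 ⟨by linarith, hr1, hr2⟩
  have hM : m = uM n l x := by unfold uM; rw [h0.1]; ring
  have hB : b = uB n l x := by
    unfold uB
    rw [h0.2, Int.add_mul_ediv_left _ _ hn.ne',
      Int.ediv_eq_zero_of_lt (by omega) (by omega)]
    ring
  have hA : a = uA n x := by
    unfold uA
    have e1 : (x - 1) % n = (x - 1) % (n * l) % n := (Int.emod_emod_of_dvd _ ⟨l, rfl⟩).symm
    rw [e1, h0.2, Int.add_mul_emod_self_left, Int.emod_eq_of_lt (by omega) (by omega)]
    ring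
  exact ⟨hA, hB, hM⟩

lemma uPsi_spec (hn : 0 < n) (hl : 0 < l) {b0 : ℤ} (hb1 : 1 ≤ b0) (hb2 : b0 ≤ l) (c : ℤ) :
    uA n (uPsi n l b0 c) = (c - 1) % n + 1 ∧ uB n l (uPsi n l b0 c) = b0 ∧
      uM n l (uPsi n l b0 c) = -((c - 1) / n) := by
  have h1 := Int.emod_nonneg (c - 1) hn.ne'
  have h2 := Int.emod_lt_of_pos (c - 1) hn
  have h := u_uniq hn hl (a := (c - 1) % n + 1) (b := b0) (m := -((c - 1) / n))
    (x := uPsi n l b0 c) (by omega) (by omega) hb1 hb2 (by unfold uPsi; ring)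
  exact ⟨h.1.symm, h.2.1.symm, h.2.2.symm⟩

lemma uPsi_uC' (hn : 0 < n) (hl : 0 < l) {b0 : ℤ} (hb1 : 1 ≤ b0) (hb2 : b0 ≤ l) (c : ℤ) :
    uC n l (uPsi n l b0 c) = c := by
  obtain ⟨h1, h2, h3⟩ := uPsi_spec hn hl hb1 hb2 c
  unfold uC
  rw [h1, h3]
  have := Int.emod_add_mul_ediv (c - 1) n
  linarith

lemma uPsi_alt (b0 c : ℤ) : uPsi n l b0 c = c + n * (l - 1) * ((c - 1) / n) + n * (b0 - 1) := by
  unfold uPsi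
  linarith [Int.emod_add_mul_ediv (c - 1) n]

lemma uPsi_strictMono (hn : 0 < n) (hl : 0 < l) (b0 : ℤ) : StrictMono (uPsi n l b0) := by
  intro c c' h
  rw [uPsi_alt, uPsi_alt]
  have hd : (c - 1) / n ≤ (c' - 1) / n := Int.ediv_le_ediv hn (by omega)
  have h2 : n * (l - 1) * ((c - 1) / n) ≤ n * (l - 1) * ((c' - 1) / n) :=
    mul_le_mul_of_nonneg_left hd (by nlinarith)
  linarith

lemma u_inj (hn : 0 < n) (hl : 0 < l) {x y : ℤ} (hB : uB n l x = uB n l y)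
    (hC : uC n l x = uC n l y) : x = y := by
  have key : ∀ z : ℤ, (uC n l z - 1) % n = uA n z - 1 := by
    intro z
    have hz := uA_bounds hn z
    have e : uC n l z - 1 = (uA n z - 1) + n * (-(uM n l z)) := by unfold uC; ring
    rw [e, Int.add_mul_emod_self_left, Int.emod_eq_of_lt (by omega) (by omega)]
  have hAxy : uA n x = uA n y := by
    have k1 := key x; have k2 := key y; rw [hC] at k1; omega
  have hMxy : uM n l x = uM n l y := by
    have e1 : n * uM n l x = n * uM n l y := by
      have : uA n x - n * uM n l x = uA n y - n * uM n l y := hC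
      omega
    exact mul_left_cancel₀ hn.ne' e1
  calc x = uA n x + n * (uB n l x - 1) - n * l * uM n l x := u_decomp x hn hl
    _ = uA n y + n * (uB n l y - 1) - n * l * uM n l y := by rw [hAxy, hB, hMxy]
    _ = y := (u_decomp y hn hl).symm

lemma uPsi_uC (hn : 0 < n) (hl : 0 < l) {x b0 : ℤ} (h : uB n l x = b0) :
    uPsi n l b0 (uC n l x) = x := by
  have hb := uB_bounds hn hl x
  rw [h] at hb
  apply u_inj hn hl
  · rw [(uPsi_spec hn hl hb.1 hb.2 _).2.1, h]
  · rw [uPsi_uC' hn hl hb.1 hb.2]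

lemma uC_lt (hn : 0 < n) (hl : 0 < l) {x y b0 : ℤ} (hx : uB n l x = b0) (hy : uB n l y = b0)
    (h : x < y) : uC n l x < uC n l y := by
  by_contra hc
  push_neg at hc
  have := (uPsi_strictMono hn hl b0).monotone hc
  rw [uPsi_uC hn hl hx, uPsi_uC hn hl hy] at this
  omega

lemma uPsi_le (hn : 0 < n) (hl : 0 < l) {b0 : ℤ} (hb2 : b0 ≤ l) (c : ℤ) :
    uPsi n l b0 c ≤ n * l + l * (c - 1) := by
  unfold uPsi
  have h1 := Int.emod_nonneg (c - 1) hn.ne'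
  have h2 := Int.emod_lt_of_pos (c - 1) hn
  have h3 := Int.emod_add_mul_ediv (c - 1) n
  have h4 : n * l * ((c - 1) / n) = l * (n * ((c - 1) / n)) := by ring
  have h5 : n * ((c - 1) / n) ≤ c - 1 := by linarith
  have h6 : l * (n * ((c - 1) / n)) ≤ l * (c - 1) := mul_le_mul_of_nonneg_left h5 hl.le
  have h7 : n * (b0 - 1) ≤ n * (l - 1) := mul_le_mul_of_nonneg_left (by omega) hn.le
  linarith

lemma uPsi_ge (hn : 0 < n) (hl : 0 < l) {b0 : ℤ} (hb1 : 1 ≤ b0) (c : ℤ) :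
    1 + l * (c - n) ≤ uPsi n l b0 c := by
  unfold uPsi
  have h1 := Int.emod_nonneg (c - 1) hn.ne'
  have h2 := Int.emod_lt_of_pos (c - 1) hn
  have h3 := Int.emod_add_mul_ediv (c - 1) n
  have h4 : n * l * ((c - 1) / n) = l * (n * ((c - 1) / n)) := by ring
  have h5 : c - n ≤ n * ((c - 1) / n) := by linarith
  have h6 : l * (c - n) ≤ l * (n * ((c - 1) / n)) := mul_le_mul_of_nonneg_left h5 hl.le
  have h7 : 0 ≤ n * (b0 - 1) := mul_nonneg hn.le (by omega)
  linarith

lemma exists_uPsi_le (hn : 0 < n) (hl : 0 < l) {b0 : ℤ} (hb2 : b0 ≤ l) (T : ℤ) :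
    ∃ c : ℤ, uPsi n l b0 c ≤ T := by
  refine ⟨1 - (n * l + |T|), ?_⟩
  have h := uPsi_le hn hl hb2 (1 - (n * l + |T|))
  have habs : 0 ≤ |T| := abs_nonneg T
  have hnl : 0 ≤ n * l := by positivity
  have h2 : n * l + |T| ≤ l * (n * l + |T|) :=
    le_mul_of_one_le_left (by positivity) (by omega)
  have h3 : -|T| ≤ T := neg_abs_le T
  have h4 : l * (1 - (n * l + |T|) - 1) = -(l * (n * l + |T|)) := by ring
  linarith

lemma exists_greatest (hn : 0 < n) (hl : 0 < l) {b0 : ℤ} (hb1 : 1 ≤ b0) (hb2 : b0 ≤ l)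
    (T : ℤ) : ∃ C : ℤ, uPsi n l b0 C ≤ T ∧ ∀ c : ℤ, uPsi n l b0 c ≤ T → c ≤ C := by
  refine Int.exists_greatest_of_bdd ⟨n + max 0 (T - 1), fun c hc => ?_⟩
    (exists_uPsi_le hn hl hb2 T)
  · 
    rcases le_or_gt c n with h | h
    · have := le_max_left (0 : ℤ) (T - 1); omega
    · have h5 := uPsi_ge hn hl hb1 c
      have h6 : c - n ≤ l * (c - n) := le_mul_of_one_le_left (by omega) (by omega)
      have := le_max_right (0 : ℤ) (T - 1)
      omega
end Aux

noncomputable def uCmax (n l b0 T : ℤ) : ℤ :=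
  if h : 0 < n ∧ 0 < l ∧ 1 ≤ b0 ∧ b0 ≤ l then
    Classical.choose (exists_greatest h.1 h.2.1 h.2.2.1 h.2.2.2 T) else 0

section Aux2
variable {n l : ℤ}

lemma uCmax_spec (hn : 0 < n) (hl : 0 < l) {b0 : ℤ} (hb1 : 1 ≤ b0) (hb2 : b0 ≤ l) (T : ℤ) :
    uPsi n l b0 (uCmax n l b0 T) ≤ T ∧ ∀ c : ℤ, uPsi n l b0 c ≤ T → c ≤ uCmax n l b0 T := by
  rw [uCmax, dif_pos ⟨hn, hl, hb1, hb2⟩]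
  exact Classical.choose_spec (exists_greatest hn hl hb1 hb2 T)

lemma uCmax_eq (hn : 0 < n) (hl : 0 < l) {b0 : ℤ} (hb1 : 1 ≤ b0) (hb2 : b0 ≤ l) {T C : ℤ}
    (h1 : uPsi n l b0 C ≤ T) (h2 : T < uPsi n l b0 (C + 1)) : uCmax n l b0 T = C := by
  obtain ⟨hs1, hs2⟩ := uCmax_spec hn hl hb1 hb2 T
  have hle : uCmax n l b0 T ≤ C := by
    by_contra hc
    push_neg at hc
    have := (uPsi_strictMono hn hl b0).monotone (by omega : C + 1 ≤ uCmax n l b0 T)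
    omega
  have := hs2 C h1
  omega

lemma uCmax_base (hn : 0 < n) (hl : 0 < l) {b0 : ℤ} (hb1 : 1 ≤ b0) (hb2 : b0 ≤ l) :
    uCmax n l b0 (n * l) = n := by
  apply uCmax_eq hn hl hb1 hb2
  · have e1 : (n - 1) % n = n - 1 := Int.emod_eq_of_lt (by omega) (by omega)
    have e2 : (n - 1) / n = 0 := Int.ediv_eq_zero_of_lt (by omega) (by omega)
    unfold uPsi
    rw [e1, e2]
    have : n * b0 ≤ n * l := mul_le_mul_of_nonneg_left hb2 hn.le
    nlinarith
  · have e1 : (n + 1 - 1 : ℤ) = n := by ring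
    unfold uPsi
    rw [e1, Int.emod_self, Int.ediv_self hn.ne']
    have : 0 ≤ n * (b0 - 1) := mul_nonneg hn.le (by omega)
    nlinarith

lemma uCmax_step (hn : 0 < n) (hl : 0 < l) (T : ℤ) :
    ∑ b0 ∈ Finset.Icc (1 : ℤ) l, uCmax n l b0 (T + 1) =
      (∑ b0 ∈ Finset.Icc (1 : ℤ) l, uCmax n l b0 T) + 1 := by
  have hbs' : uB n l (T + 1) = uB n l (T + 1) := rfl
  set bs := uB n l (T + 1) with hbs
  obtain ⟨hbs1, hbs2⟩ := uB_bounds hn hl (T + 1)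
  rw [← hbs] at hbs1 hbs2
  have hmem : bs ∈ Finset.Icc (1 : ℤ) l := Finset.mem_Icc.2 ⟨hbs1, hbs2⟩
  have hpsi : uPsi n l bs (uC n l (T + 1)) = T + 1 := uPsi_uC hn hl hbs.symm
  have h1 : uCmax n l bs (T + 1) = uC n l (T + 1) := by
    apply uCmax_eq hn hl hbs1 hbs2
    · exact le_of_eq hpsi
    · have h := uPsi_strictMono hn hl bs
        (show uC n l (T + 1) < uC n l (T + 1) + 1 by omega)
      omega
  have h2 : uCmax n l bs T = uC n l (T + 1) - 1 := by
    apply uCmax_eq hn hl hbs1 hbs2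
    · have h := uPsi_strictMono hn hl bs
        (show uC n l (T + 1) - 1 < uC n l (T + 1) by omega)
      omega
    · have e : uC n l (T + 1) - 1 + 1 = uC n l (T + 1) := by ring
      rw [e, hpsi]
      omega
  have h3 : ∀ b0 ∈ Finset.Icc (1 : ℤ) l, b0 ≠ bs →
      uCmax n l b0 (T + 1) = uCmax n l b0 T := by
    intro b0 hm hne
    obtain ⟨hb1, hb2⟩ := Finset.mem_Icc.1 hm
    obtain ⟨p1, p2⟩ := uCmax_spec hn hl hb1 hb2 T
    obtain ⟨q1, q2⟩ := uCmax_spec hn hl hb1 hb2 (T + 1)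
    have hA : uPsi n l b0 (uCmax n l b0 (T + 1)) ≠ T + 1 := by
      intro he
      apply hne
      rw [hbs, ← he, (uPsi_spec hn hl hb1 hb2 _).2.1]
    have r1 := p2 (uCmax n l b0 (T + 1)) (by omega)
    have r2 := q2 (uCmax n l b0 T) (by omega)
    omega
  have hsum : ∑ b0 ∈ Finset.Icc (1 : ℤ) l, (uCmax n l b0 (T + 1) - uCmax n l b0 T) = 1 := by
    rw [Finset.sum_eq_single_of_mem bs hmem]
    · rw [h1, h2]; ring
    · intro b0 hm hne
      rw [h3 b0 hm hne]; ring
  rw [Finset.sum_sub_distrib] at hsum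
  omega

lemma sum_uCmax (hn : 0 < n) (hl : 0 < l) (T : ℤ) :
    ∑ b0 ∈ Finset.Icc (1 : ℤ) l, uCmax n l b0 T = T := by
  have base : ∑ b0 ∈ Finset.Icc (1 : ℤ) l, uCmax n l b0 (n * l) = n * l := by
    rw [Finset.sum_congr rfl (fun b0 hm => uCmax_base hn hl (Finset.mem_Icc.1 hm).1
      (Finset.mem_Icc.1 hm).2)]
    rw [Finset.sum_const, Int.card_Icc, nsmul_eq_mul]
    have : ((l + 1 - 1).toNat : ℤ) = l := by
      rw [Int.toNat_of_nonneg (by omega)]; ring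
    rw [this]; ring
  rcases le_total (n * l) T with h | h
  · exact Int.le_induction
      (motive := fun T _ => ∑ b0 ∈ Finset.Icc (1 : ℤ) l, uCmax n l b0 T = T) base
      (fun k _ ih => by rw [uCmax_step hn hl k]; rw [ih]) T h
  · exact Int.le_induction_down
      (motive := fun T _ => ∑ b0 ∈ Finset.Icc (1 : ℤ) l, uCmax n l b0 T = T) base
      (fun k _ ih => by
        have hs := uCmax_step hn hl (k - 1)
        rw [show k - 1 + 1 = k by ring] at hs
        omega) T h
end Aux2
/-- Uglov's decomposition of an ordered semi-infinite sequence of charge `s`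
into `l` strictly decreasing subsequences with charges `s_1, …, s_l` summing to `s`.
Sequences are 0-indexed: `k i = s - i` eventually corresponds to `k_i = s - i + 1`
(1-indexed) in the paper. -/
theorem stmt1 (n l : ℕ) (hn : 0 < n) (hl : 0 < l) (s : ℤ)
    (k a b m : ℕ → ℤ)
    (ha : ∀ i, 1 ≤ a i ∧ a i ≤ (n : ℤ)) (hb : ∀ i, 1 ≤ b i ∧ b i ≤ (l : ℤ))
    (hk : ∀ i, k i = a i + n * (b i - 1) - n * l * m i)
    (hdec : ∀ i, k (i + 1) < k i)
    (hev : ∃ N, ∀ i ≥ N, k i = s - i) :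
    (∀ b0 ∈ Finset.Icc (1 : ℤ) (l : ℤ),
      ∃ e : ℕ → ℕ, StrictMono e ∧ Set.range e = {i | b i = b0}) ∧
    (∀ b0 ∈ Finset.Icc (1 : ℤ) (l : ℤ), ∀ e : ℕ → ℕ, StrictMono e →
      Set.range e = {i | b i = b0} →
      (∀ j, a (e (j + 1)) - n * m (e (j + 1)) < a (e j) - n * m (e j)) ∧
      ∃! t : ℤ, ∃ N, ∀ j ≥ N, a (e j) - n * m (e j) = t - j) ∧
    ∃ sb : ℤ → ℤ, (∑ b0 ∈ Finset.Icc (1 : ℤ) (l : ℤ), sb b0) = s ∧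
      ∀ b0 ∈ Finset.Icc (1 : ℤ) (l : ℤ), ∀ e : ℕ → ℕ, StrictMono e →
        Set.range e = {i | b i = b0} →
        ∃ N, ∀ j ≥ N, a (e j) - n * m (e j) = sb b0 - j := by
  classical
  obtain ⟨N, hN⟩ := hev
  have hn' : (0 : ℤ) < n := by exact_mod_cast hn
  have hl' : (0 : ℤ) < l := by exact_mod_cast hl
  -- identify the given decomposition with the canonical one
  have hid : ∀ i, a i = uA n (k i) ∧ b i = uB n l (k i) ∧ m i = uM n l (k i) := fun i =>
    u_uniq hn' hl' (ha i).1 (ha i).2 (hb i).1 (hb i).2 (hk i)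
  have hcc : ∀ i, a i - n * m i = uC n l (k i) := by
    intro i
    unfold uC
    rw [← (hid i).1, ← (hid i).2.2]
  have kanti : StrictAnti k := strictAnti_nat_of_succ_lt hdec
  -- every small enough integer is a value of the tail of `k`
  have hval : ∀ x : ℤ, x ≤ s - N → ∃ i : ℕ, N ≤ i ∧ k i = x ∧ (i : ℤ) = s - x := by
    intro x hx
    have h0 : (N : ℤ) ≤ s - x := by omega
    have h1 : (0 : ℤ) ≤ s - x := le_trans (Int.natCast_nonneg N) h0
    refine ⟨(s - x).toNat, ?_, ?_, ?_⟩
    · omega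
    · have := hN (s - x).toNat (by omega)
      rw [this]
      omega
    · omega
  -- each fiber is infinite
  have hinf : ∀ b0 : ℤ, 1 ≤ b0 → b0 ≤ (l : ℤ) → {i | b i = b0}.Infinite := by
    intro b0 h1 h2
    apply Set.infinite_of_forall_exists_gt
    intro I
    obtain ⟨c, hc⟩ := exists_uPsi_le hn' hl' h2 (min (s - N) (s - I - 1))
    obtain ⟨i, hiN, hik, his⟩ := hval (uPsi n l b0 c)
      (le_trans hc (min_le_left _ _))
    refine ⟨i, ?_, ?_⟩
    · show b i = b0
      rw [(hid i).2.1, hik]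
      exact (uPsi_spec hn' hl' h1 h2 c).2.1
    · have h3 : uPsi (n : ℤ) l b0 c ≤ s - I - 1 := le_trans hc (min_le_right _ _)
      omega
  have part1 : ∀ b0 ∈ Finset.Icc (1 : ℤ) (l : ℤ),
      ∃ e : ℕ → ℕ, StrictMono e ∧ Set.range e = {i | b i = b0} := by
    intro b0 hm
    obtain ⟨h1, h2⟩ := Finset.mem_Icc.1 hm
    have hI := hinf b0 h1 h2
    exact ⟨Nat.nth (fun i => b i = b0), Nat.nth_strictMono hI, Nat.range_nth_of_infinite hI⟩
  -- the core eventual computation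
  have core : ∀ b0 : ℤ, 1 ≤ b0 → b0 ≤ (l : ℤ) → ∀ e : ℕ → ℕ, StrictMono e →
      Set.range e = {i | b i = b0} →
      ∀ j, ((Finset.range N).filter (fun i => b i = b0)).card ≤ j →
        uC n l (k (e j)) = uCmax n l b0 (s - N) +
          ((Finset.range N).filter (fun i => b i = b0)).card - j := by
    intro b0 h1 h2 e he hre
    set nb := ((Finset.range N).filter (fun i => b i = b0)).card with hnb
    have hfib : ∀ j, b (e j) = b0 := by
      intro j
      have : e j ∈ Set.range e := ⟨j, rfl⟩
      rwa [hre] at this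
    have hBj : ∀ j, uB n l (k (e j)) = b0 := fun j => by
      rw [← (hid (e j)).2.1]; exact hfib j
    have hmemiff : ∀ i, b i = b0 → ∃ j, e j = i := by
      intro i hi
      have : i ∈ Set.range e := by rw [hre]; exact hi
      exact this
    have hcard : ((Finset.range N).filter (fun j => e j < N)).card = nb := by
      have himg : Finset.image e ((Finset.range N).filter (fun j => e j < N)) =
          (Finset.range N).filter (fun i => b i = b0) := by
        ext i
        simp only [Finset.mem_image, Finset.mem_filter, Finset.mem_range]
        constructor
        · rintro ⟨j, ⟨_, hejN⟩, rfl⟩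
          exact ⟨hejN, hfib j⟩
        · rintro ⟨hiN, hib⟩
          obtain ⟨j, rfl⟩ := hmemiff i hib
          exact ⟨j, ⟨lt_of_le_of_lt he.le_apply hiN, hiN⟩, rfl⟩
      rw [hnb, ← himg, Finset.card_image_of_injective _ he.injective]
    have hA : ∀ j, e j < N ↔ j < nb := by
      intro j
      constructor
      · intro hj
        have hsub : Finset.range (j + 1) ⊆ (Finset.range N).filter (fun j => e j < N) := by
          intro j' hj'
          simp only [Finset.mem_range] at hj'
          have hle : e j' ≤ e j := he.monotone (by omega)
          simp only [Finset.mem_filter, Finset.mem_range]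
          have : j' ≤ e j' := he.le_apply
          omega
        have := Finset.card_le_card hsub
        rw [hcard, Finset.card_range] at this
        omega
      · intro hj
        by_contra hc
        push_neg at hc
        have hsub : (Finset.range N).filter (fun j => e j < N) ⊆ Finset.range j := by
          intro j'' hj''
          simp only [Finset.mem_filter, Finset.mem_range] at hj''
          simp only [Finset.mem_range]
          exact he.lt_iff_lt.1 (lt_of_lt_of_le hj''.2 hc)
        have := Finset.card_le_card hsub
        rw [hcard, Finset.card_range] at this
        omega
    have hkj : ∀ j, nb ≤ j → k (e j) = s - e j ∧ (N : ℤ) ≤ (e j : ℤ) := by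
      intro j hj
      have hNle : N ≤ e j := by
        have := hA j
        omega
      exact ⟨hN (e j) hNle, by exact_mod_cast hNle⟩
    have hbase : uC n l (k (e nb)) = uCmax n l b0 (s - N) := by
      obtain ⟨hk1, hk2⟩ := hkj nb le_rfl
      obtain ⟨p1, p2⟩ := uCmax_spec hn' hl' h1 h2 (s - N)
      apply le_antisymm
      · apply p2
        rw [uPsi_uC hn' hl' (hBj nb), hk1]
        omega
      · obtain ⟨i0, hi0N, hi0k, hi0s⟩ := hval (uPsi n l b0 (uCmax n l b0 (s - N))) p1
        have hbi0 : b i0 = b0 := by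
          rw [(hid i0).2.1, hi0k]
          exact (uPsi_spec hn' hl' h1 h2 _).2.1
        obtain ⟨j0, rfl⟩ := hmemiff i0 hbi0
        have hj0 : nb ≤ j0 := by
          have := hA j0
          omega
        have hle : k (e j0) ≤ k (e nb) := kanti.antitone (he.monotone hj0)
        have hCx : uC n l (uPsi n l b0 (uCmax n l b0 (s - N))) = uCmax n l b0 (s - N) :=
          uPsi_uC' hn' hl' h1 h2 _
        rcases lt_or_eq_of_le hle with hlt | heq
        · rw [← hCx, ← hi0k]
          exact le_of_lt (uC_lt hn' hl' (hBj j0) (hBj nb) hlt)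
        · rw [← hCx, ← hi0k, heq]
    intro j hj
    induction j, hj using Nat.le_induction with
    | base =>
      rw [hbase]
      ring
    | succ j hj ih =>
      have hstep : uC n l (k (e (j + 1))) = uC n l (k (e j)) - 1 := by
        obtain ⟨hk1, hk2⟩ := hkj j hj
        obtain ⟨hk1', hk2'⟩ := hkj (j + 1) (by omega)
        have hlt : k (e (j + 1)) < k (e j) := kanti (he (Nat.lt_succ_self j))
        have hcl : uC n l (k (e (j + 1))) < uC n l (k (e j)) :=
          uC_lt hn' hl' (hBj (j + 1)) (hBj j) hlt
        by_contra hne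
        have hle2 : uC n l (k (e (j + 1))) ≤ uC n l (k (e j)) - 2 := by omega
        have hxlt1 : uPsi n l b0 (uC n l (k (e j)) - 1) < k (e j) := by
          conv_rhs => rw [← uPsi_uC hn' hl' (hBj j)]
          exact uPsi_strictMono hn' hl' b0 (by omega)
        have hxgt : k (e (j + 1)) < uPsi n l b0 (uC n l (k (e j)) - 1) := by
          conv_lhs => rw [← uPsi_uC hn' hl' (hBj (j + 1))]
          exact uPsi_strictMono hn' hl' b0 (by omega)
        have hxle : uPsi (n : ℤ) l b0 (uC n l (k (e j)) - 1) ≤ s - N := by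
          omega
        obtain ⟨i1, hi1N, hi1k, hi1s⟩ := hval _ hxle
        have hbi1 : b i1 = b0 := by
          rw [(hid i1).2.1, hi1k]
          exact (uPsi_spec hn' hl' h1 h2 _).2.1
        obtain ⟨j1, rfl⟩ := hmemiff i1 hbi1
        have l1 : e j < e j1 := kanti.lt_iff_gt.1 (by rw [hi1k]; exact hxlt1)
        have l2 : e j1 < e (j + 1) := kanti.lt_iff_gt.1 (by rw [hi1k]; exact hxgt)
        have m1 : j < j1 := he.lt_iff_lt.1 l1
        have m2 : j1 < j + 1 := he.lt_iff_lt.1 l2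
        omega
      rw [hstep, ih]
      push_cast
      ring
  refine ⟨part1, ?_, ?_⟩
  · intro b0 hm e he hre
    obtain ⟨h1, h2⟩ := Finset.mem_Icc.1 hm
    have hfib : ∀ j, b (e j) = b0 := by
      intro j
      have : e j ∈ Set.range e := ⟨j, rfl⟩
      rwa [hre] at this
    have hBj : ∀ j, uB n l (k (e j)) = b0 := fun j => by
      rw [← (hid (e j)).2.1]; exact hfib j
    constructor
    · intro j
      rw [hcc, hcc]
      exact uC_lt hn' hl' (hBj (j + 1)) (hBj j) (kanti (he (Nat.lt_succ_self j)))
    · refine ⟨uCmax n l b0 (s - N) + ((Finset.range N).filter (fun i => b i = b0)).card,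
        ⟨((Finset.range N).filter (fun i => b i = b0)).card, fun j hj => ?_⟩, ?_⟩
      · rw [hcc]
        exact core b0 h1 h2 e he hre j hj
      · rintro t ⟨N', hN'⟩
        have h1' := hN' (max ((Finset.range N).filter (fun i => b i = b0)).card N')
          (le_max_right _ _)
        have h2' := core b0 h1 h2 e he hre
          (max ((Finset.range N).filter (fun i => b i = b0)).card N') (le_max_left _ _)
        rw [hcc] at h1'
        omega
  · refine ⟨fun b0 => uCmax n l b0 (s - N) +
      ((Finset.range N).filter (fun i => b i = b0)).card, ?_, ?_⟩
    · rw [Finset.sum_add_distrib, sum_uCmax hn' hl' (s - N)]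
      have hcount : (Finset.range N).card =
          ∑ b0 ∈ Finset.Icc (1 : ℤ) (l : ℤ), ((Finset.range N).filter (fun i => b i = b0)).card :=
        Finset.card_eq_sum_card_fiberwise (fun i _ => Finset.mem_Icc.2 (hb i))
      have hc2 : (∑ b0 ∈ Finset.Icc (1 : ℤ) (l : ℤ),
          (((Finset.range N).filter (fun i => b i = b0)).card : ℤ)) = (N : ℤ) := by
        rw [← Nat.cast_sum, ← hcount, Finset.card_range]
      rw [hc2]
      ring
    · intro b0 hm e he hre
      obtain ⟨h1, h2⟩ := Finset.mem_Icc.1 hm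
      exact ⟨((Finset.range N).filter (fun i => b i = b0)).card, fun j hj => by
        rw [hcc]
        exact core b0 h1 h2 e he hre j hj⟩
end

section
/- Let n, l be positive integers, M an integer with M > 2n, and let λ = (λ^{(1)}, …, λ^{(l)}) be an l-partition with multi-charge s = (s_1, …, s_l) satisfying s_i − s_{i+1} > M + |λ| for i = 1, …, l−1 (M-dominance). Fix b_1 < b_2 in {1, …, l}. Set p = ℓ(λ^{(b_1)}) + 1, where ℓ denotes the number of nonzero parts. Write k^{(b)}_i = s_b − i + 1 + λ^{(b)}_i = a^{(b)}_i − n·m^{(b)}_i with a^{(b)}_i ∈ {1,…,n}, m^{(b)}_i ∈ ℤ. Then a^{(b_1)}_p + n(b_1 − 1) − n·l·m^{(b_1)}_p > a^{(b_2)}_1 + n(b_2 − 1) − n·l·m^{(b_2)}_1. -/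
/-- Total size of an `l`-partition with components indexed by `b ∈ {1,…,l}`,
parts `1`-indexed, represented as `ℤ`-valued functions. -/
noncomputable def mpSize (l : ℕ) (lam : ℕ → ℕ → ℤ) : ℤ :=
  ∑ b ∈ Finset.Icc 1 l, ∑ᶠ i, lam b i

private lemma finsum_lower (f : ℕ → ℤ) (hnn : ∀ i, 0 ≤ f i) (N : ℕ)
    (hN : ∀ i ≥ N, f i = 0) (t : Finset ℕ) :
    ∑ i ∈ t, f i ≤ ∑ᶠ i, f i := by
  have hsub : Function.support f ⊆ ↑(Finset.range N ∪ t) := by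
    intro x hx
    simp only [Finset.coe_union, Finset.coe_range, Set.mem_union, Set.mem_Iio]
    by_contra h
    push_neg at h
    exact hx (hN x h.1)
  rw [finsum_eq_sum_of_support_subset f hsub]
  exact Finset.sum_le_sum_of_subset_of_nonneg Finset.subset_union_right
    (fun i _ _ => hnn i)

set_option maxHeartbeats 1000000

/-- inequality (3.8.1) of the paper. -/
theorem stmt5 (n l : ℕ) (hn : 0 < n) (hl : 0 < l) (M : ℤ) (hM : M > 2 * n)
    (s : ℕ → ℤ) (lam : ℕ → ℕ → ℤ)
    (hpart : ∀ b, 1 ≤ b → b ≤ l → (∀ i, 1 ≤ i → lam b (i + 1) ≤ lam b i) ∧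
      (∀ i, 0 ≤ lam b i) ∧ (∃ N, ∀ i ≥ N, lam b i = 0))
    (hdom : ∀ b, 1 ≤ b → b < l → s b - s (b + 1) > M + mpSize l lam)
    (b1 b2 : ℕ) (hb1 : 1 ≤ b1) (hb12 : b1 < b2) (hb2 : b2 ≤ l)
    (p : ℕ) (hp : 1 ≤ p) (hp0 : lam b1 p = 0)
    (hp1 : ∀ i, 1 ≤ i → i < p → 0 < lam b1 i)
    (a1 m1 a2 m2 : ℤ)
    (ha1 : 1 ≤ a1 ∧ a1 ≤ (n : ℤ)) (ha2 : 1 ≤ a2 ∧ a2 ≤ (n : ℤ))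
    (hk1 : s b1 - p + 1 + lam b1 p = a1 - n * m1)
    (hk2 : s b2 - 1 + 1 + lam b2 1 = a2 - n * m2) :
    a1 + n * ((b1 : ℤ) - 1) - n * l * m1 > a2 + n * ((b2 : ℤ) - 1) - n * l * m2 := by
  set S := mpSize l lam with hSdef
  have hb1l : b1 ≤ l := le_trans (le_of_lt hb12) hb2
  have hb2ge : 1 ≤ b2 := le_trans hb1 (le_of_lt hb12)
  obtain ⟨_, hnn1, N1, hN1⟩ := hpart b1 hb1 hb1l
  obtain ⟨_, hnn2, N2, hN2⟩ := hpart b2 hb2ge hb2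
  -- each component sum nonneg
  have hcomp : ∀ b ∈ Finset.Icc 1 l, 0 ≤ ∑ᶠ i, lam b i := by
    intro b hb
    rw [Finset.mem_Icc] at hb
    obtain ⟨_, hnn, N, hN⟩ := hpart b hb.1 hb.2
    exact finsum_nonneg hnn
  have hS0 : 0 ≤ S := Finset.sum_nonneg hcomp
  -- lower bounds for components b1 and b2
  have h1 : ((p : ℤ) - 1) ≤ ∑ᶠ i, lam b1 i := by
    calc ((p : ℤ) - 1) = ∑ i ∈ Finset.Icc 1 (p - 1), (1 : ℤ) := by
          rw [Finset.sum_const, Nat.card_Icc, nsmul_eq_mul, mul_one]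
          omega
      _ ≤ ∑ i ∈ Finset.Icc 1 (p - 1), lam b1 i := by
          apply Finset.sum_le_sum
          intro i hi
          rw [Finset.mem_Icc] at hi
          exact hp1 i hi.1 (by omega)
      _ ≤ ∑ᶠ i, lam b1 i := finsum_lower _ hnn1 N1 hN1 _
  have h2 : lam b2 1 ≤ ∑ᶠ i, lam b2 i := by
    calc lam b2 1 = ∑ i ∈ {1}, lam b2 i := by simp
      _ ≤ ∑ᶠ i, lam b2 i := finsum_lower _ hnn2 N2 hN2 _
  -- sum of the two components ≤ S
  have hpair : (∑ᶠ i, lam b1 i) + (∑ᶠ i, lam b2 i) ≤ S := by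
    have hsub : ({b1, b2} : Finset ℕ) ⊆ Finset.Icc 1 l := by
      intro x hx
      simp only [Finset.mem_insert, Finset.mem_singleton] at hx
      rw [Finset.mem_Icc]
      rcases hx with rfl | rfl <;> omega
    have := Finset.sum_le_sum_of_subset_of_nonneg hsub
      (fun b hb _ => hcomp b hb)
    rwa [Finset.sum_pair (by omega : b1 ≠ b2)] at this
  have hPS : (p : ℤ) - 1 + lam b2 1 ≤ S := by linarith
  -- telescoping gap bound
  have key : ∀ c, b1 < c → c ≤ l → s b1 - s c ≥ ((c : ℤ) - b1) * (M + S + 1) := by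
    intro c hc hcl
    induction c, hc using Nat.le_induction with
    | base =>
        have := hdom b1 hb1 (by omega)
        push_cast
        have : s b1 - s (b1 + 1) ≥ M + S + 1 := this
        linarith
    | succ c hc ih =>
        have h1 := ih (by omega)
        have h2 := hdom c (by omega) (by omega)
        have h2' : s c - s (c + 1) ≥ M + S + 1 := h2
        push_cast
        push_cast at h1
        nlinarith
  have hgap := key b2 hb12 hb2
  have hd1 : (1 : ℤ) ≤ (b2 : ℤ) - b1 := by
    have : (b1 : ℤ) < b2 := by exact_mod_cast hb12
    linarith
  rw [hp0] at hk1
  -- eliminate m1, m2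
  have hm1 : (n : ℤ) * m1 = a1 - (s b1 - p + 1) := by linarith
  have hm2 : (n : ℤ) * m2 = a2 - (s b2 + lam b2 1) := by linarith
  have hl1 : (1 : ℤ) ≤ l := by exact_mod_cast hl
  have hn1 : (1 : ℤ) ≤ n := by exact_mod_cast hn
  have e1 : (n : ℤ) * l * m1 = l * (a1 - (s b1 - p + 1)) := by
    rw [mul_comm (n : ℤ) (l : ℤ), mul_assoc, hm1]
  have e2 : (n : ℤ) * l * m2 = l * (a2 - (s b2 + lam b2 1)) := by
    rw [mul_comm (n : ℤ) (l : ℤ), mul_assoc, hm2]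
  rw [e1, e2]
  have hgap' : s b1 - s b2 ≥ ((b2 : ℤ) - b1) * (M + S + 1) := hgap
  nlinarith [mul_nonneg (sub_nonneg.2 hl1) (sub_nonneg.2 hd1),
    mul_nonneg (mul_nonneg (sub_nonneg.2 hd1) (sub_nonneg.2 hl1)) hS0,
    mul_le_mul_of_nonneg_left hgap' (by linarith : (0:ℤ) ≤ (l:ℤ)),
    mul_le_mul_of_nonneg_left hPS (by linarith : (0:ℤ) ≤ (l:ℤ)),
    mul_nonneg (mul_nonneg (by linarith : (0:ℤ) ≤ (b2:ℤ) - b1) (by linarith : (0:ℤ) ≤ (l:ℤ))) (by linarith : (0:ℤ) ≤ M - 2*n - 1),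
    mul_nonneg (sub_nonneg.2 hl1) (sub_nonneg.2 ha1.2),
    mul_nonneg (sub_nonneg.2 hl1) (sub_nonneg.2 ha2.1)]
end

section
/- Under the hypotheses of Lemma 3.8 (|λ, s⟩ is M-dominant with M > 2n, and b_1 < b_2 fixed), for any index i let σ(i) be the smallest j such that the wedge-factor u^{(b_2)}_{k_i^{(b_2)}} is larger than u^{(b_1)}_{k_j^{(b_1)}} in the total order of (3.5.1). Then λ^{(b_1)}_{σ(i)} = 0 and k^{(b_1)}_{σ(i)} = n − n·m^{(b_2)}_i, where k^{(b_2)}_i = a^{(b_2)}_i − n·m^{(b_2)}_i with a^{(b_2)}_i ∈ {1,…,n}. -/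
/-- weakly decreasing from index 1 -/
lemma aux_anti (f : ℕ → ℤ) (h : ∀ i, 1 ≤ i → f (i + 1) ≤ f i) :
    ∀ j j' : ℕ, 1 ≤ j → j ≤ j' → f j' ≤ f j := by
  intro j j' hj hle
  induction j' with
  | zero => omega
  | succ m ih =>
    rcases Nat.lt_or_ge j (m + 1) with h1 | h1
    · exact le_trans (h m (by omega)) (ih (by omega))
    · have : j = m + 1 := by omega
      subst this; exact le_refl _

/-- Lemma 3.8 of the paper: under `M`-dominance with `M > 2n` and
`b_1 < b_2`, if `σ` is the smallest `j ≥ 1` such that the wedge factor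
`u^{(b_2)}_{k_i^{(b_2)}}` is larger than `u^{(b_1)}_{k_j^{(b_1)}}` (comparison of
the integers `a + n(b-1) - n·l·m` as in (3.5.1)), then `λ^{(b_1)}_σ = 0` and
`k^{(b_1)}_σ = n - n·m^{(b_2)}_i`.  Here `k^{(b)}_j = s_b - j + 1 + λ^{(b)}_j`
and `k^{(b)}_j = A b j - n·(Mm b j)` with `A b j ∈ {1,…,n}`. -/
theorem stmt6 (n l : ℕ) (hn : 0 < n) (hl : 0 < l) (M : ℤ) (hM : M > 2 * n)
    (s : ℕ → ℤ) (lam : ℕ → ℕ → ℤ)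
    (hpart : ∀ b, 1 ≤ b → b ≤ l → (∀ i, 1 ≤ i → lam b (i + 1) ≤ lam b i) ∧
      (∀ i, 0 ≤ lam b i) ∧ (∃ N, ∀ i ≥ N, lam b i = 0))
    (hdom : ∀ b, 1 ≤ b → b < l → s b - s (b + 1) > M + mpSize l lam)
    (b1 b2 : ℕ) (hb1 : 1 ≤ b1) (hb12 : b1 < b2) (hb2 : b2 ≤ l)
    (A Mm : ℕ → ℕ → ℤ)
    (hA : ∀ b i, 1 ≤ A b i ∧ A b i ≤ (n : ℤ) ∧
      s b - i + 1 + lam b i = A b i - n * Mm b i)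
    (i : ℕ) (hi : 1 ≤ i)
    (sg : ℕ) (hsg1 : 1 ≤ sg)
    (hsg : A b2 i + n * ((b2 : ℤ) - 1) - n * l * Mm b2 i >
           A b1 sg + n * ((b1 : ℤ) - 1) - n * l * Mm b1 sg)
    (hsgmin : ∀ j, 1 ≤ j → j < sg →
      ¬(A b2 i + n * ((b2 : ℤ) - 1) - n * l * Mm b2 i >
        A b1 j + n * ((b1 : ℤ) - 1) - n * l * Mm b1 j)) :
    lam b1 sg = 0 ∧ s b1 - sg + 1 + lam b1 sg = n - n * Mm b2 i := by
  have hb1l : b1 ≤ l := by omega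
  obtain ⟨hmono1, hnn1, N1, hN1⟩ := hpart b1 hb1 hb1l
  obtain ⟨hmono2, hnn2, N2, hN2⟩ := hpart b2 (by omega) hb2
  set S1 : ℤ := ∑ᶠ j, lam b1 j with hS1def
  set S2 : ℤ := ∑ᶠ j, lam b2 j with hS2def
  set P : ℤ := mpSize l lam with hPdef
  -- basic nonnegativity
  have hS0 : ∀ b, 1 ≤ b → b ≤ l → (0:ℤ) ≤ ∑ᶠ j, lam b j := fun b h1 h2 =>
    finsum_nonneg (hpart b h1 h2).2.1
  have hP0 : (0:ℤ) ≤ P := by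
    refine Finset.sum_nonneg fun b hb => ?_
    rw [Finset.mem_Icc] at hb
    exact hS0 b hb.1 hb.2
  -- S1 + S2 ≤ P
  have hpairP : S1 + S2 ≤ P := by
    have hsub : ({b1, b2} : Finset ℕ) ⊆ Finset.Icc 1 l := by
      intro x hx
      rw [Finset.mem_insert, Finset.mem_singleton] at hx
      rw [Finset.mem_Icc]
      rcases hx with h | h <;> omega
    have := Finset.sum_le_sum_of_subset_of_nonneg hsub
      (fun b hb _ => by rw [Finset.mem_Icc] at hb; exact hS0 b hb.1 hb.2)
      (f := fun b => ∑ᶠ j, lam b j)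
    rwa [Finset.sum_pair (by omega : b1 ≠ b2)] at this
  -- single part bounds
  have hlam2 : lam b2 i ≤ S2 := by
    refine single_le_finsum i ?_ hnn2
    exact Set.Finite.subset (Set.finite_Iio N2) (fun x hx => by
      simp only [Set.mem_Iio]
      by_contra hxN
      exact hx (hN2 x (by omega)))
  have hsumS1 : ∀ m : ℕ, ∑ j ∈ Finset.Icc 1 m, lam b1 j ≤ S1 := by
    intro m
    have hsup : Function.support (lam b1) ⊆ ↑(Finset.range (max N1 (m + 1))) := by
      intro x hx
      simp only [Finset.coe_range, Set.mem_Iio, lt_max_iff]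
      left
      by_contra hxN
      exact hx (hN1 x (by omega))
    have heq : S1 = ∑ j ∈ Finset.range (max N1 (m + 1)), lam b1 j :=
      finsum_eq_sum_of_support_subset _ hsup
    rw [heq]
    refine Finset.sum_le_sum_of_subset_of_nonneg ?_ (fun j _ _ => hnn1 j)
    intro j hj
    rw [Finset.mem_Icc] at hj
    rw [Finset.mem_range]
    omega
  have hbig : ∀ m : ℕ, 1 ≤ m → 1 ≤ lam b1 m → (m : ℤ) ≤ S1 := by
    intro m hm h1
    refine le_trans ?_ (hsumS1 m)
    calc (m : ℤ) = ∑ _j ∈ Finset.Icc 1 m, (1:ℤ) := by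
          rw [Finset.sum_const, Nat.card_Icc]; simp
      _ ≤ ∑ j ∈ Finset.Icc 1 m, lam b1 j := by
          refine Finset.sum_le_sum fun j hj => ?_
          rw [Finset.mem_Icc] at hj
          exact le_trans h1 (aux_anti (lam b1) hmono1 j m hj.1 hj.2)
  -- telescoping: s b1 - s b2 > M + P
  have htel : ∀ c : ℕ, b1 < c → c ≤ l → s b1 - s c > M + P := by
    intro c
    induction c with
    | zero => omega
    | succ m ih =>
      intro h1 h2
      rcases Nat.lt_or_ge b1 m with hm | hm
      · have h3 := ih hm (by omega)
        have h4 := hdom m (by omega) (by omega)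
        have hn0 : (0:ℤ) ≤ (n:ℤ) := by positivity
        have hMP : (0:ℤ) ≤ M + P := by linarith
        linarith
      · have hmb : m = b1 := by omega
        rw [hmb]
        exact hdom b1 hb1 (by omega)
  have hgap : s b1 - s b2 > M + P := htel b2 hb12 hb2
  -- notations for A and Mm values
  obtain ⟨hA2a, hA2b, hk2⟩ := hA b2 i
  obtain ⟨hA1a, hA1b, hk1⟩ := hA b1 sg
  have hnl : (0:ℤ) < (n:ℤ) * l := by positivity
  have hnZ : (0:ℤ) < (n:ℤ) := by exact_mod_cast hn
  -- from hsg : Mm b1 sg ≥ Mm b2 i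
  have hb2l : ((b2:ℤ) - b1) ≤ (l:ℤ) - 1 := by
    have : (b2:ℤ) ≤ l := by exact_mod_cast hb2
    have : (1:ℤ) ≤ b1 := by exact_mod_cast hb1
    omega
  have hb21 : (1:ℤ) ≤ (b2:ℤ) - b1 := by
    have : (b1:ℤ) < b2 := by exact_mod_cast hb12
    omega
  have hm1t : Mm b2 i ≤ Mm b1 sg := by
    by_contra hcon
    push_neg at hcon
    have h1 : Mm b1 sg - Mm b2 i + 1 ≤ 0 := by omega
    have h2 : (n:ℤ) * l * (Mm b1 sg - Mm b2 i + 1) ≤ 0 :=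
      mul_nonpos_of_nonneg_of_nonpos hnl.le h1
    have h3 : (n:ℤ) * ((b2:ℤ) - b1) ≤ (n:ℤ) * ((l:ℤ) - 1) :=
      mul_le_mul_of_nonneg_left hb2l hnZ.le
    linarith [hsg, hA1a, hA2b, h2, h3]
  -- k1 ≤ n - n * t and hence k1 - k2 ≤ n - 1
  have hk1le : s b1 - sg + 1 + lam b1 sg ≤ (n:ℤ) - n * Mm b2 i := by
    have : (n:ℤ) * Mm b2 i ≤ n * Mm b1 sg := mul_le_mul_of_nonneg_left hm1t hnZ.le
    linarith [hk1, hA1b]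
  have hk2ge : (1:ℤ) - n * Mm b2 i ≤ s b2 - i + 1 + lam b2 i := by linarith [hk2, hA2a]
  -- lam b1 sg = 0
  have hlam0 : lam b1 sg = 0 := by
    by_contra hcon
    have h1 : 1 ≤ lam b1 sg := by have := hnn1 sg; omega
    have h2 : (sg : ℤ) ≤ S1 := hbig sg hsg1 h1
    have hiZ : (1:ℤ) ≤ i := by exact_mod_cast hi
    have hlam2' : lam b2 i ≤ S2 := hlam2
    -- k1 - k2 > M + 2 > n - 1, contradiction with hk1le/hk2ge
    have hn0 : (0:ℤ) ≤ n := hnZ.le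
    linarith
  refine ⟨hlam0, ?_⟩
  -- sg ≥ 2
  have hsg2 : 2 ≤ sg := by
    by_contra hcon
    have hsgeq : sg = 1 := by omega
    subst hsgeq
    have hiZ : (1:ℤ) ≤ i := by exact_mod_cast hi
    have hS1nn : (0:ℤ) ≤ S1 := hS0 b1 hb1 hb1l
    have hS2nn : (0:ℤ) ≤ S2 := hS0 b2 (by omega) hb2
    have hn0 : (0:ℤ) ≤ n := hnZ.le
    have : ((1:ℕ) : ℤ) = 1 := by norm_num
    linarith [hk1le, hk2ge, hlam2, hgap, hpairP, hlam0]
  -- lam b1 (sg - 1) = 0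
  have hsgcast : ((sg - 1 : ℕ) : ℤ) = (sg : ℤ) - 1 := by
    have : (1:ℤ) ≤ (sg:ℤ) := by exact_mod_cast hsg1
    push_cast [Nat.cast_sub (by omega : 1 ≤ sg)]
    ring
  have hlam0' : lam b1 (sg - 1) = 0 := by
    by_contra hcon
    have h1 : 1 ≤ lam b1 (sg - 1) := by have := hnn1 (sg - 1); omega
    have h2 : ((sg - 1 : ℕ) : ℤ) ≤ S1 := hbig (sg - 1) (by omega) h1
    rw [hsgcast] at h2
    have hiZ : (1:ℤ) ≤ i := by exact_mod_cast hi
    have hn0 : (0:ℤ) ≤ n := hnZ.le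
    linarith [hk1le, hk2ge, hlam2, hgap, hpairP, hlam0]
  -- the previous factor: minimality
  obtain ⟨hA1a', hA1b', hk1'⟩ := hA b1 (sg - 1)
  have hmin := hsgmin (sg - 1) (by omega) (by omega)
  push_neg at hmin
  have hm1t' : Mm b1 (sg - 1) + 1 ≤ Mm b2 i := by
    by_contra hcon
    push_neg at hcon
    have h1 : Mm b2 i - Mm b1 (sg - 1) ≤ 0 := by omega
    have h2 : (n:ℤ) * l * (Mm b2 i - Mm b1 (sg - 1)) ≤ 0 :=
      mul_nonpos_of_nonneg_of_nonpos hnl.le h1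
    have h3 : (n:ℤ) * 1 ≤ (n:ℤ) * ((b2:ℤ) - b1) :=
      mul_le_mul_of_nonneg_left hb21 hnZ.le
    linarith [hmin, hA2a, hA1b', h2, h3]
  -- consecutive k values
  have hkrel : A b1 (sg - 1) - n * Mm b1 (sg - 1) = A b1 sg - n * Mm b1 sg + 1 := by
    rw [← hk1', ← hk1, hlam0, hlam0', hsgcast]
    ring
  -- final algebra: A b1 sg = n, Mm b1 sg = Mm b2 i
  have hD1 : 1 ≤ Mm b1 sg - Mm b1 (sg - 1) := by omega
  have hnD : (n:ℤ) * 1 ≤ (n:ℤ) * (Mm b1 sg - Mm b1 (sg - 1)) :=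
    mul_le_mul_of_nonneg_left hD1 hnZ.le
  have hA1n : A b1 sg = n := by
    have : (n:ℤ) ≤ A b1 sg := by linarith [hA1a', hkrel, hnD]
    exact le_antisymm hA1b this
  have hDle : Mm b1 sg - Mm b1 (sg - 1) ≤ 1 := by
    have hnD2 : (n:ℤ) * (Mm b1 sg - Mm b1 (sg - 1)) ≤ (n:ℤ) * 1 := by
      have h5 : A b1 (sg - 1) ≤ (n:ℤ) := hA1b'
      linarith [hkrel, hA1n, h5]
    exact le_of_mul_le_mul_left hnD2 hnZ
  have hmeq : Mm b1 sg = Mm b2 i := by omega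
  rw [hk1, hA1n, hmeq]
end
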